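/- Let A be a real symmetric n×n matrix with A i j ≤ 0 for all i ≠ j, and let D, D' be diagonal real matrices. Then both A + D and A + D' have lowest-eigenvalue eigenvectors with all non-negative components. In other words, the existence of a phase-coherent ground state is invariant under arbitrary changes of the diagonal (single-particle energies). -/

import Mathlib

open Matrix

lemma stmt_11_key {n : ℕ} (hn : 1 ≤ n) (M : Matrix (Fin n) (Fin n) ℝ)
    (hsymm : ∀ i j, M i j = M j i) (hoff : ∀ i j, i ≠ j → M i j ≤ 0) :
    ∃ (μ : ℝ) (v : Fin n → ℝ), v ≠ 0 ∧ M.mulVec v = μ • v ∧ (∀ i, 0 ≤ v i) ∧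
      ∀ (μ' : ℝ) (w : Fin n → ℝ), w ≠ 0 → M.mulVec w = μ' • w → μ ≤ μ' := by
  have hM : M.IsHermitian := by
    ext i j; simpa using hsymm j i
  haveI : Nonempty (Fin n) := ⟨⟨0, hn⟩⟩
  obtain ⟨i0, -, hmin⟩ := Finset.exists_min_image Finset.univ hM.eigenvalues
    ⟨Classical.arbitrary _, Finset.mem_univ _⟩
  set μ := hM.eigenvalues i0 with hμ
  set U : Matrix (Fin n) (Fin n) ℝ := (hM.eigenvectorUnitary : Matrix (Fin n) (Fin n) ℝ) with hU
  have hUU : U * star U = 1 := (Matrix.mem_unitaryGroup_iff).mp hM.eigenvectorUnitary.2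
  -- N := M - μ • 1 is positive semidefinite
  have hNpsd : (M - μ • 1).PosSemidef := by
    have h1 : M - μ • 1 = U * (Matrix.diagonal (fun i => hM.eigenvalues i - μ)) * star U := by
      have hsp : M = U * (Matrix.diagonal (RCLike.ofReal ∘ hM.eigenvalues)) * star U :=
          hM.spectral_theorem
      have h2 : (μ • (1 : Matrix (Fin n) (Fin n) ℝ)) = U * (μ • 1) * star U := by
        rw [Matrix.mul_smul, mul_one, Matrix.smul_mul, hUU]
      calc M - μ • 1 = U * (Matrix.diagonal (RCLike.ofReal ∘ hM.eigenvalues)) * star U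
            - U * (μ • 1) * star U := by rw [← hsp, ← h2]
        _ = U * ((Matrix.diagonal (RCLike.ofReal ∘ hM.eigenvalues)) - μ • 1) * star U := by
            rw [Matrix.mul_sub, Matrix.sub_mul]
        _ = U * (Matrix.diagonal (fun i => hM.eigenvalues i - μ)) * star U := by
            congr 2
            rw [Matrix.smul_one_eq_diagonal, ← Matrix.diagonal_sub]
            rfl
    rw [h1]
    exact (Matrix.posSemidef_diagonal_iff.mpr fun i =>
      sub_nonneg.2 (hmin i (Finset.mem_univ i))).mul_mul_conjTranspose_same U
  have hquad : ∀ x : Fin n → ℝ, μ * (x ⬝ᵥ x) ≤ x ⬝ᵥ M *ᵥ x := by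
    intro x
    have h := hNpsd.dotProduct_mulVec_nonneg x
    simp only [star_trivial, Matrix.sub_mulVec, Matrix.smul_mulVec, Matrix.one_mulVec,
      dotProduct_sub, dotProduct_smul, smul_eq_mul, sub_nonneg] at h
    exact h
  have hself_nonneg : ∀ x : Fin n → ℝ, 0 ≤ x ⬝ᵥ x := fun x =>
    Finset.sum_nonneg fun i _ => mul_self_nonneg _
  have hminimal : ∀ (μ' : ℝ) (w : Fin n → ℝ), w ≠ 0 → M.mulVec w = μ' • w → μ ≤ μ' := by
    intro μ' w hw hmw
    have h := hquad w
    rw [hmw, dotProduct_smul, smul_eq_mul] at h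
    have hw2 : 0 < w ⬝ᵥ w :=
      lt_of_le_of_ne (hself_nonneg w) (fun h0 => hw (dotProduct_self_eq_zero.mp h0.symm))
    exact le_of_mul_le_mul_left (by rwa [mul_comm μ, mul_comm μ'] at h) hw2
  set u : Fin n → ℝ := ⇑(hM.eigenvectorBasis i0) with hu_def
  have hu : M *ᵥ u = μ • u := hM.mulVec_eigenvectorBasis i0
  have hune : u ≠ 0 := by
    intro h
    apply hM.eigenvectorBasis.orthonormal.ne_zero i0
    ext i
    exact congrFun h i
  set v : Fin n → ℝ := fun i => |u i| with hv_def
  have hvne : v ≠ 0 := by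
    intro h
    apply hune
    funext i
    have := congrFun h i
    simpa [hv_def, abs_eq_zero] using this
  have hvv : v ⬝ᵥ v = u ⬝ᵥ u :=
    Finset.sum_congr rfl fun i _ => abs_mul_abs_self (u i)
  have expand : ∀ x : Fin n → ℝ, x ⬝ᵥ M *ᵥ x = ∑ i, ∑ j, M i j * (x i * x j) := by
    intro x
    simp only [dotProduct, Matrix.mulVec, dotProduct, Finset.mul_sum]
    exact Finset.sum_congr rfl fun i _ => Finset.sum_congr rfl fun j _ => by ring
  have hMv : v ⬝ᵥ M *ᵥ v ≤ u ⬝ᵥ M *ᵥ u := by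
    rw [expand, expand]
    refine Finset.sum_le_sum fun i _ => Finset.sum_le_sum fun j _ => ?_
    rcases eq_or_ne i j with rfl | h
    · simp [hv_def, abs_mul_abs_self]
    · have h1 : u i * u j ≤ v i * v j := by
        simpa [hv_def, abs_mul] using le_abs_self (u i * u j)
      exact mul_le_mul_of_nonpos_left h1 (hoff i j h)
  have huMu : u ⬝ᵥ M *ᵥ u = μ * (u ⬝ᵥ u) := by
    rw [hu, dotProduct_smul, smul_eq_mul]
  have heq : v ⬝ᵥ M *ᵥ v = μ * (v ⬝ᵥ v) :=
    le_antisymm (by rw [hvv]; calc v ⬝ᵥ M *ᵥ v ≤ u ⬝ᵥ M *ᵥ u := hMv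
                                  _ = μ * (u ⬝ᵥ u) := huMu) (hquad v)
  have hzero : (M - μ • 1) *ᵥ v = 0 := by
    apply (hNpsd.dotProduct_mulVec_zero_iff v).mp
    simp only [star_trivial, Matrix.sub_mulVec, Matrix.smul_mulVec, Matrix.one_mulVec,
      dotProduct_sub, dotProduct_smul, smul_eq_mul]
    rw [heq, sub_self]
  have hev : M *ᵥ v = μ • v := by
    have := hzero
    rw [Matrix.sub_mulVec, Matrix.smul_mulVec, Matrix.one_mulVec, sub_eq_zero] at this
    exact this
  exact ⟨μ, v, hvne, hev, fun i => abs_nonneg _, hminimal⟩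

/-- If A is real symmetric with non-positive off-diagonal entries and D, D' are arbitrary
real diagonal matrices, then both A + D and A + D' possess a componentwise non-negative
eigenvector for their lowest eigenvalue. -/
theorem stmt_11 (n : ℕ) (hn : 1 ≤ n) (A D D' : Matrix (Fin n) (Fin n) ℝ)
    (hsymm : ∀ i j, A i j = A j i)
    (hoff : ∀ i j, i ≠ j → A i j ≤ 0)
    (hD : D.IsDiag) (hD' : D'.IsDiag) :
    (∃ (μ : ℝ) (v : Fin n → ℝ), v ≠ 0 ∧ (A + D).mulVec v = μ • v ∧ (∀ i, 0 ≤ v i) ∧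
      ∀ (μ' : ℝ) (w : Fin n → ℝ), w ≠ 0 → (A + D).mulVec w = μ' • w → μ ≤ μ') ∧
    (∃ (μ : ℝ) (v : Fin n → ℝ), v ≠ 0 ∧ (A + D').mulVec v = μ • v ∧ (∀ i, 0 ≤ v i) ∧
      ∀ (μ' : ℝ) (w : Fin n → ℝ), w ≠ 0 → (A + D').mulVec w = μ' • w → μ ≤ μ') := by
  constructor
  · refine stmt_11_key hn (A + D) (fun i j => ?_) (fun i j hij => ?_)
    · rcases eq_or_ne i j with rfl | h
      · rfl
      · simp [Matrix.add_apply, hsymm i j, hD h, hD h.symm]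
    · simp [Matrix.add_apply, hD hij, hoff i j hij]
  · refine stmt_11_key hn (A + D') (fun i j => ?_) (fun i j hij => ?_)
    · rcases eq_or_ne i j with rfl | h
      · rfl
      · simp [Matrix.add_apply, hsymm i j, hD' h, hD' h.symm]
    · simp [Matrix.add_apply, hD' hij, hoff i j hij]
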